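/- arXiv:1411.7838 — 8 statements merged into one kernel-verified Lean document; each statement's English description precedes it below -/
import Mathlib

section
/- Let G = (V, E, w) be an influence graph, X ⊆ V, v ∈ X, and u ∈ V. If every directed path in G from v to u contains a node of X ∖ {v}, then p(u | X) = p(u | X ∖ {v}). (The activation probability of u depends only on those effectors that are connected to u by a directed path containing no other effector.) -/
/-- The set of nodes reachable from some node of `X` by a directed path
using only arcs of `S`. -/
def reach {V : Type*} (S : Set (V × V)) (X : Set V) : Set V :=
  {v | ∃ x ∈ X, Relation.ReflTransGen (fun a b : V => (a, b) ∈ S) x v}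

/-- The live-arc probability of the arc subset `S ⊆ E`:
`P(S) = (∏_{e ∈ S} w(e)) · (∏_{e ∈ E∖S} (1 − w(e)))`. -/
def liveP {V : Type*} [DecidableEq V] (w : V × V → ℚ) (E S : Finset (V × V)) : ℚ :=
  (∏ e ∈ S, w e) * ∏ e ∈ E \ S, (1 - w e)

open Classical in
/-- The activation probability `p(v|X)` of node `v` for effector set `X`. -/
noncomputable def actProb {V : Type*} [Fintype V] [DecidableEq V]
    (w : V × V → ℚ) (E : Finset (V × V)) (X : Set V) (v : V) : ℚ :=
  ∑ S ∈ E.powerset.filter (fun T : Finset (V × V) => v ∈ reach (↑T : Set (V × V)) X),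
    liveP w E S

lemma chain_mem_reflTransGen {V : Type*} {r : V → V → Prop} :
    ∀ (l : List V) (a b : V), List.Chain r a l → b ∈ a :: l →
      Relation.ReflTransGen r b ((a :: l).getLast (by simp)) := by
  intro l
  induction l with
  | nil =>
    intro a b _ hb
    simp at hb
    subst hb
    simpa using Relation.ReflTransGen.refl
  | cons c l ih =>
    intro a b hchain hb
    obtain ⟨hac, hchain'⟩ := List.chain_cons.mp hchain
    have hlast : ((a :: c :: l).getLast (by simp)) = ((c :: l).getLast (by simp)) := by
      simp [List.getLast_cons]
    rw [hlast]
    rcases List.mem_cons.mp hb with h | h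
    · subst h
      exact Relation.ReflTransGen.head hac (ih c c hchain' List.mem_cons_self)
    · exact ih c b hchain' h

/-- If every directed path from the effector `v ∈ X` to `u` contains
a node of `X ∖ {v}`, then removing `v` from the effector set does not change the
activation probability of `u`. -/
theorem actProb_erase_of_paths_blocked {V : Type*} [Fintype V] [DecidableEq V]
    (E : Finset (V × V)) (w : V × V → ℚ)
    (hw : ∀ e ∈ E, 0 < w e ∧ w e ≤ 1)
    (X : Set V) (v : V) (hv : v ∈ X) (u : V)
    (hpaths : ∀ l : List V,
      List.Chain (fun a b : V => (a, b) ∈ (↑E : Set (V × V))) v l →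
      (v :: l).getLast (by simp) = u → ∃ z ∈ X \ {v}, z ∈ v :: l) :
    actProb w E X u = actProb w E (X \ {v}) u := by
  classical
  unfold actProb
  apply Finset.sum_congr _ (fun _ _ => rfl)
  apply Finset.filter_congr
  intro S hS
  rw [Finset.mem_powerset] at hS
  constructor
  · rintro ⟨x, hxX, hxu⟩
    by_cases hxv : x = v
    · subst hxv
      obtain ⟨l, hchain, hlast⟩ := List.exists_isChain_cons_of_relationReflTransGen hxu
      have hchainE : List.Chain (fun a b : V => (a, b) ∈ (↑E : Set (V × V))) x l := by
        refine List.Chain.imp (fun a b hab => ?_) hchain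
        exact_mod_cast hS hab
      obtain ⟨z, hz, hzmem⟩ := hpaths l hchainE hlast
      refine ⟨z, hz, ?_⟩
      have := chain_mem_reflTransGen l x z hchain hzmem
      rwa [hlast] at this
    · exact ⟨x, ⟨hxX, hxv⟩, hxu⟩
  · rintro ⟨x, hxX, hxu⟩
    exact ⟨x, hxX.1, hxu⟩
end

section
/- Let G = (V, E) be a finite directed graph and let A, X ⊆ V. Set X' := A ∩ reach(X). Then |X'| ≤ |A| and the symmetric difference satisfies |A Δ reach(X')| ≤ |A Δ reach(X)|. (In the deterministic case, replacing an effector set by the target nodes it activates never increases the cost; hence at most |A| effectors are needed.) -/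
/-- Replacing an effector set `X` by `X' := A ∩ reach(X)` never
increases the deterministic cost `|A Δ reach(·)|`, and `|X'| ≤ |A|`. -/
theorem target_effectors_suffice {V : Type*} [Fintype V]
    (E : Set (V × V)) (A X : Set V) :
    (A ∩ reach E X).ncard ≤ A.ncard ∧
    ((A \ reach E (A ∩ reach E X)) ∪ (reach E (A ∩ reach E X) \ A)).ncard ≤
      ((A \ reach E X) ∪ (reach E X \ A)).ncard := by
  have hsub : reach E (A ∩ reach E X) ⊆ reach E X := by
    rintro v ⟨x', ⟨hxA, x, hxX, hxx'⟩, hx'v⟩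
    exact ⟨x, hxX, hxx'.trans hx'v⟩
  have hXR' : A ∩ reach E X ⊆ reach E (A ∩ reach E X) :=
    fun v hv => ⟨v, hv, Relation.ReflTransGen.refl⟩
  constructor
  · exact Set.ncard_le_ncard Set.inter_subset_left (Set.toFinite A)
  · apply Set.ncard_le_ncard _ (Set.toFinite _)
    rintro v (⟨hvA, hvR'⟩ | ⟨hvR', hvA⟩)
    · exact Or.inl ⟨hvA, fun hvR => hvR' (hXR' ⟨hvA, hvR⟩)⟩
    · exact Or.inr ⟨hsub hvR', hvA⟩
end

section
/- Let G = (V, E, w) be an influence graph and let E_det := { e ∈ E : w(e) = 1 } be its set of deterministic arcs. Then for every X ⊆ V and every v ∈ V: (i) p(v|X) = 1 if and only if v ∈ reach_{E_det}(X), and (ii) p(v|X) > 0 if and only if v ∈ reach_E(X). -/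
lemma reach_mono {V : Type*} {S T : Set (V × V)} (h : S ⊆ T) (X : Set V) :
    reach S X ⊆ reach T X := by
  rintro v ⟨x, hx, hxy⟩
  exact ⟨x, hx, Relation.ReflTransGen.mono (fun a b hab => h hab) x v hxy⟩

lemma sum_liveP {V : Type*} [DecidableEq V] (w : V × V → ℚ) (E : Finset (V × V)) :
    ∑ S ∈ E.powerset, liveP w E S = 1 := by
  have := Finset.prod_add (fun e => w e) (fun e => 1 - w e) E
  simp only [add_sub_cancel, Finset.prod_const_one] at this
  unfold liveP
  exact this.symm

lemma liveP_nonneg {V : Type*} [DecidableEq V] {w : V × V → ℚ} {E S : Finset (V × V)}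
    (hw : ∀ e ∈ E, 0 < w e ∧ w e ≤ 1) (hS : S ⊆ E) : 0 ≤ liveP w E S := by
  apply mul_nonneg
  · exact Finset.prod_nonneg fun e he => (hw e (hS he)).1.le
  · exact Finset.prod_nonneg fun e he => by
      have := (hw e (Finset.mem_sdiff.mp he).1).2; linarith

lemma liveP_pos {V : Type*} [DecidableEq V] {w : V × V → ℚ} {E S : Finset (V × V)}
    (hw : ∀ e ∈ E, 0 < w e ∧ w e ≤ 1) (hS : S ⊆ E)
    (hdet : E.filter (fun e => w e = 1) ⊆ S) : 0 < liveP w E S := by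
  apply mul_pos
  · exact Finset.prod_pos fun e he => (hw e (hS he)).1
  · apply Finset.prod_pos
    intro e he
    obtain ⟨heE, heS⟩ := Finset.mem_sdiff.mp he
    have h1 : w e ≠ 1 := fun h => heS (hdet (Finset.mem_filter.mpr ⟨heE, h⟩))
    have := (hw e heE).2
    cases lt_or_eq_of_le this with
    | inl h => linarith
    | inr h => exact absurd h h1

lemma liveP_eq_zero {V : Type*} [DecidableEq V] {w : V × V → ℚ} {E S : Finset (V × V)}
    (hS : S ⊆ E) (hdet : ¬ E.filter (fun e => w e = 1) ⊆ S) : liveP w E S = 0 := by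
  obtain ⟨e, he, heS⟩ := Finset.not_subset.mp hdet
  obtain ⟨heE, hwe⟩ := Finset.mem_filter.mp he
  have : e ∈ E \ S := Finset.mem_sdiff.mpr ⟨heE, heS⟩
  unfold liveP
  rw [Finset.prod_eq_zero this (by rw [hwe]; ring), mul_zero]

/-- `p(v|X) = 1` iff `v` is reachable from `X` via deterministic arcs,
and `p(v|X) > 0` iff `v` is reachable from `X` via arbitrary arcs. -/
theorem actProb_eq_one_iff_and_pos_iff {V : Type*} [Fintype V] [DecidableEq V]
    (E : Finset (V × V)) (w : V × V → ℚ)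
    (hw : ∀ e ∈ E, 0 < w e ∧ w e ≤ 1)
    (X : Set V) (v : V) :
    (actProb w E X v = 1 ↔
      v ∈ reach (↑(E.filter (fun e => w e = 1)) : Set (V × V)) X) ∧
    (0 < actProb w E X v ↔ v ∈ reach (↑E : Set (V × V)) X) := by
  classical
  set Ed := E.filter (fun e => w e = 1) with hEd
  have hEdE : Ed ⊆ E := Finset.filter_subset _ _
  set p := fun T : Finset (V × V) => v ∈ reach (↑T : Set (V × V)) X with hp
  have hsplit : actProb w E X v + ∑ S ∈ E.powerset.filter (fun S => ¬ p S), liveP w E S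
      = 1 := by
    rw [actProb]
    rw [Finset.sum_filter_add_sum_filter_not E.powerset p (liveP w E)]
    exact sum_liveP w E
  have hnonneg : ∀ S ∈ E.powerset.filter (fun S => ¬ p S), 0 ≤ liveP w E S :=
    fun S hS => liveP_nonneg hw (Finset.mem_powerset.mp (Finset.mem_filter.mp hS).1)
  have hrest_nonneg : 0 ≤ ∑ S ∈ E.powerset.filter (fun S => ¬ p S), liveP w E S :=
    Finset.sum_nonneg hnonneg
  constructor
  · constructor
    · intro h1
      have hrest : ∑ S ∈ E.powerset.filter (fun S => ¬ p S), liveP w E S = 0 := by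
        linarith
      by_contra hv
      -- Ed is a term outside filter with positive liveP
      have hmem : Ed ∈ E.powerset.filter (fun S => ¬ p S) := by
        refine Finset.mem_filter.mpr ⟨Finset.mem_powerset.mpr hEdE, hv⟩
      have hpos : 0 < liveP w E Ed := liveP_pos hw hEdE (le_refl _)
      have := (Finset.sum_eq_zero_iff_of_nonneg hnonneg).mp hrest Ed hmem
      linarith
    · intro hv
      have hrest : ∑ S ∈ E.powerset.filter (fun S => ¬ p S), liveP w E S = 0 := by
        apply Finset.sum_eq_zero
        intro S hS
        obtain ⟨hS1, hS2⟩ := Finset.mem_filter.mp hS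
        have hSE := Finset.mem_powerset.mp hS1
        by_cases hd : Ed ⊆ S
        · exfalso
          exact hS2 (reach_mono (by exact_mod_cast hd) X hv)
        · exact liveP_eq_zero hSE hd
      linarith
  · constructor
    · intro h
      obtain ⟨S, hS, hSpos⟩ : ∃ S ∈ E.powerset.filter p, 0 < liveP w E S := by
        by_contra hc
        push_neg at hc
        have : actProb w E X v ≤ 0 := Finset.sum_nonpos fun S hS => hc S hS
        linarith
      obtain ⟨hS1, hS2⟩ := Finset.mem_filter.mp hS
      exact reach_mono (by exact_mod_cast Finset.mem_powerset.mp hS1) X hS2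
    · intro hv
      have hmem : E ∈ E.powerset.filter p :=
        Finset.mem_filter.mpr ⟨Finset.mem_powerset_self E, hv⟩
      have hpos : 0 < liveP w E E := liveP_pos hw (le_refl _) hEdE
      exact Finset.sum_pos' (fun S hS =>
        liveP_nonneg hw (Finset.mem_powerset.mp (Finset.mem_filter.mp hS).1))
        ⟨E, hmem, hpos⟩
end

section
/- Let G = (V, E, w) be an influence graph with deterministic arcs E_det := { e ∈ E : w(e) = 1 }, let A ⊆ V be a target set, and let X ⊆ V. Then C_A(G, X) = 0 if and only if A ⊆ reach_{E_det}(X) and reach_E(X) ⊆ A. (This characterization underlies the linear-time algorithm for Effectors with cost c = 0.) -/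
/-- The cost `C_A(G, X) = ∑_{v ∈ A} (1 − p(v|X)) + ∑_{v ∈ V∖A} p(v|X)`. -/
noncomputable def cost {V : Type*} [Fintype V] [DecidableEq V]
    (w : V × V → ℚ) (E : Finset (V × V)) (A : Finset V) (X : Set V) : ℚ :=
  (∑ v ∈ A, (1 - actProb w E X v)) + ∑ v ∈ Aᶜ, actProb w E X v

lemma actProb_nonneg {V : Type*} [Fintype V] [DecidableEq V]
    {w : V × V → ℚ} {E : Finset (V × V)} (hw : ∀ e ∈ E, 0 < w e ∧ w e ≤ 1)
    (X : Set V) (v : V) : 0 ≤ actProb w E X v := by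
  classical
  apply Finset.sum_nonneg
  intro S hS
  exact liveP_nonneg hw (Finset.mem_powerset.mp (Finset.mem_filter.mp hS).1)

lemma actProb_le_one {V : Type*} [Fintype V] [DecidableEq V]
    {w : V × V → ℚ} {E : Finset (V × V)} (hw : ∀ e ∈ E, 0 < w e ∧ w e ≤ 1)
    (X : Set V) (v : V) : actProb w E X v ≤ 1 := by
  classical
  rw [← sum_liveP w E]
  apply Finset.sum_le_sum_of_subset_of_nonneg (Finset.filter_subset _ _)
  intro S hS _
  exact liveP_nonneg hw (Finset.mem_powerset.mp hS)

lemma actProb_eq_one_iff {V : Type*} [Fintype V] [DecidableEq V]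
    {w : V × V → ℚ} {E : Finset (V × V)} (hw : ∀ e ∈ E, 0 < w e ∧ w e ≤ 1)
    (X : Set V) (v : V) :
    actProb w E X v = 1 ↔ v ∈ reach (↑(E.filter (fun e => w e = 1)) : Set (V × V)) X := by
  classical
  set D := E.filter (fun e => w e = 1) with hD
  have hDsub : D ⊆ E := Finset.filter_subset _ _
  have hlivD : 0 < liveP w E D := by
    apply mul_pos
    · apply Finset.prod_pos
      intro e he
      exact (hw e (hDsub he)).1
    · apply Finset.prod_pos
      intro e he
      obtain ⟨heE, heD⟩ := Finset.mem_sdiff.mp he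
      have h2 := (hw e heE).2
      have : w e ≠ 1 := fun h => heD (Finset.mem_filter.mpr ⟨heE, h⟩)
      have : w e < 1 := lt_of_le_of_ne h2 this
      linarith
  constructor
  · intro h1
    by_contra hv
    have hsplit : actProb w E X v +
        ∑ S ∈ E.powerset.filter
          (fun T : Finset (V × V) => ¬ v ∈ reach (↑T : Set (V × V)) X), liveP w E S = 1 := by
      rw [actProb, Finset.sum_filter_add_sum_filter_not, sum_liveP]
    have hDmem : D ∈ E.powerset.filter
        (fun T : Finset (V × V) => ¬ v ∈ reach (↑T : Set (V × V)) X) :=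
      Finset.mem_filter.mpr ⟨Finset.mem_powerset.mpr hDsub, hv⟩
    have hge : liveP w E D ≤ ∑ S ∈ E.powerset.filter
        (fun T : Finset (V × V) => ¬ v ∈ reach (↑T : Set (V × V)) X), liveP w E S := by
      apply Finset.single_le_sum (f := fun S => liveP w E S) _ hDmem
      intro S hS
      exact liveP_nonneg hw (Finset.mem_powerset.mp (Finset.mem_filter.mp hS).1)
    rw [h1] at hsplit
    linarith
  · intro hv
    rw [actProb, Finset.sum_filter]
    rw [← sum_liveP w E]
    apply Finset.sum_congr rfl
    intro S hS
    by_cases h : v ∈ reach (↑S : Set (V × V)) X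
    · simp [h]
    · simp only [h, if_false]
      -- D ⊄ S, so some deterministic edge outside S
      have hnsub : ¬ (↑D : Set (V × V)) ⊆ (↑S : Set (V × V)) := by
        intro hsub
        exact h (reach_mono hsub X hv)
      obtain ⟨e, heD, heS⟩ : ∃ e ∈ D, e ∉ S := by
        by_contra hc
        push_neg at hc
        exact hnsub fun e he => hc e he
      have heES : e ∈ E \ S := Finset.mem_sdiff.mpr ⟨hDsub heD, heS⟩
      have hwe : w e = 1 := (Finset.mem_filter.mp heD).2
      symm
      rw [liveP]
      apply mul_eq_zero_of_right
      exact Finset.prod_eq_zero heES (by rw [hwe]; ring)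

lemma actProb_eq_zero_iff {V : Type*} [Fintype V] [DecidableEq V]
    {w : V × V → ℚ} {E : Finset (V × V)} (hw : ∀ e ∈ E, 0 < w e ∧ w e ≤ 1)
    (X : Set V) (v : V) :
    actProb w E X v = 0 ↔ v ∉ reach (↑E : Set (V × V)) X := by
  classical
  constructor
  · intro h0 hv
    have hEmem : E ∈ E.powerset.filter
        (fun T : Finset (V × V) => v ∈ reach (↑T : Set (V × V)) X) :=
      Finset.mem_filter.mpr ⟨Finset.mem_powerset.mpr le_rfl, hv⟩
    have hpos : 0 < liveP w E E := by
      rw [liveP]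
      simp only [Finset.sdiff_self, Finset.prod_empty, mul_one]
      exact Finset.prod_pos fun e he => (hw e he).1
    have : 0 < actProb w E X v := by
      rw [actProb]
      apply Finset.sum_pos'
      · intro S hS
        exact liveP_nonneg hw (Finset.mem_powerset.mp (Finset.mem_filter.mp hS).1)
      · exact ⟨E, hEmem, hpos⟩
    linarith
  · intro hv
    rw [actProb, Finset.filter_false_of_mem, Finset.sum_empty]
    intro S hS h
    exact hv (reach_mono (by exact_mod_cast Finset.mem_powerset.mp hS) X h)

/-- The cost is zero iff all targets are reached deterministically
and nothing outside the target set is reachable at all. -/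
theorem cost_eq_zero_iff {V : Type*} [Fintype V] [DecidableEq V]
    (E : Finset (V × V)) (w : V × V → ℚ)
    (hw : ∀ e ∈ E, 0 < w e ∧ w e ≤ 1)
    (A : Finset V) (X : Set V) :
    cost w E A X = 0 ↔
      ((↑A : Set V) ⊆ reach (↑(E.filter (fun e => w e = 1)) : Set (V × V)) X ∧
       reach (↑E : Set (V × V)) X ⊆ (↑A : Set V)) := by
  unfold cost
  have h1 : 0 ≤ ∑ v ∈ A, (1 - actProb w E X v) :=
    Finset.sum_nonneg fun v _ => by have := actProb_le_one hw X v; linarith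
  have h2 : 0 ≤ ∑ v ∈ Aᶜ, actProb w E X v :=
    Finset.sum_nonneg fun v _ => actProb_nonneg hw X v
  rw [add_eq_zero_iff_of_nonneg h1 h2,
    Finset.sum_eq_zero_iff_of_nonneg
      (fun v _ => by have := actProb_le_one hw X v; linarith),
    Finset.sum_eq_zero_iff_of_nonneg (fun v _ => actProb_nonneg hw X v)]
  constructor
  · rintro ⟨ha, hb⟩
    constructor
    · intro v hv
      have := ha v hv
      exact (actProb_eq_one_iff hw X v).mp (by linarith)
    · intro v hv
      by_contra hvA
      exact (actProb_eq_zero_iff hw X v).mp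
        (hb v (Finset.mem_compl.mpr hvA)) hv
  · rintro ⟨ha, hb⟩
    constructor
    · intro v hv
      have := (actProb_eq_one_iff hw X v).mpr (ha hv)
      linarith
    · intro v hv
      exact (actProb_eq_zero_iff hw X v).mpr
        (fun h => Finset.mem_compl.mp hv (hb h))
end

section
/- Let G = (V, E) be a finite directed graph with distinct nodes s, t ∈ V, and let E_st ⊆ E be the set of arcs that lie on some simple directed path from s to t. For an arc set F ⊆ E, say F connects s to t if t ∈ reach_F({s}). Then the number of arc subsets F ⊆ E connecting s to t equals the number of arc subsets F ⊆ E_st connecting s to t, multiplied by 2^{|E ∖ E_st|}. In symbols: |{ F ⊆ E : t ∈ reach_F({s}) }| = |{ F ⊆ E_st : t ∈ reach_F({s}) }| · 2^{|E ∖ E_st|}. -/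
open Classical in
/-- The arcs of `E` that lie on some simple directed path from `s` to `t`. -/
noncomputable def simplePathArcs {V : Type*} [DecidableEq V]
    (E : Finset (V × V)) (s t : V) : Finset (V × V) :=
  E.filter (fun e => ∃ l : List V, l.Nodup ∧
    List.Chain' (fun a b : V => (a, b) ∈ E) l ∧
    l.head? = some s ∧ l.getLast? = some t ∧ e ∈ l.zip l.tail)

private lemma chain'_zip {V : Type*} {r : V → V → Prop} :
    ∀ {l : List V}, List.Chain' r l → ∀ e ∈ l.zip l.tail, r e.1 e.2 := by
  intro l
  induction l with
  | nil => intro _ e he; simp at he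
  | cons a l ih =>
    cases l with
    | nil => intro _ e he; simp at he
    | cons b l =>
      intro h e he
      simp only [List.Chain', List.isChain_cons_cons] at h
      simp only [List.tail_cons, List.zip_cons_cons, List.mem_cons] at he
      rcases he with rfl | he
      · exact h.1
      · exact ih h.2 e (by simpa using he)

private lemma chain'_of_zip {V : Type*} {r : V → V → Prop} :
    ∀ {l : List V}, (∀ e ∈ l.zip l.tail, r e.1 e.2) → List.Chain' r l := by
  intro l
  induction l with
  | nil => intro _; exact List.IsChain.nil
  | cons a l ih =>
    cases l with
    | nil => intro _; exact List.IsChain.singleton a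
    | cons b l =>
      intro h
      simp only [List.Chain', List.isChain_cons_cons]
      refine ⟨h (a, b) (by simp), ih fun e he => h e ?_⟩
      simp only [List.tail_cons, List.zip_cons_cons, List.mem_cons]
      right; simpa using he

/-- Any chain can be shortened to a duplicate-free chain with the same endpoints,
whose interior nodes come from the original chain. -/
private lemma cut_chain {V : Type*} [DecidableEq V] {r : V → V → Prop} :
    ∀ (n : ℕ) (l : List V), l.length ≤ n → ∀ s : V, List.Chain r s l →
      ∃ m : List V, List.Chain r s m ∧ (s :: m).getLast? = (s :: l).getLast? ∧
        (s :: m).Nodup ∧ ∀ x ∈ m, x ∈ l := by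
  intro n
  induction n with
  | zero =>
    intro l hl s _
    rw [Nat.le_zero, List.length_eq_zero_iff] at hl
    subst hl
    exact ⟨[], List.Chain.nil, rfl, by simp, by simp⟩
  | succ n ih =>
    intro l hl s hchain
    by_cases hs : s ∈ l
    · obtain ⟨l₁, l₂, rfl⟩ := List.append_of_mem hs
      have h₂ : List.Chain r s l₂ := (List.isChain_cons_split.1 hchain).2
      have hlen : l₂.length ≤ n := by
        have := hl
        simp only [List.length_append, List.length_cons] at this
        omega
      obtain ⟨m, hm₁, hm₂, hm₃, hm₄⟩ := ih l₂ hlen s h₂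
      refine ⟨m, hm₁, ?_, hm₃, fun x hx => by simp [hm₄ x hx]⟩
      rw [hm₂]
      have : s :: (l₁ ++ s :: l₂) = (s :: l₁) ++ (s :: l₂) := by simp
      rw [this, List.getLast?_append_of_ne_nil _ (by simp)]
    · cases l with
      | nil => exact ⟨[], List.Chain.nil, rfl, by simp, by simp⟩
      | cons a l' =>
        simp only [List.Chain, List.isChain_cons_cons] at hchain
        have hlen : l'.length ≤ n := by simpa using hl
        obtain ⟨m, hm₁, hm₂, hm₃, hm₄⟩ := ih l' hlen a hchain.2
        refine ⟨a :: m, List.chain_cons.2 ⟨hchain.1, hm₁⟩, ?_, ?_, ?_⟩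
        · rw [List.getLast?_cons_cons, hm₂, List.getLast?_cons_cons]
        · rw [List.nodup_cons]
          refine ⟨?_, hm₃⟩
          intro hmem
          rcases List.mem_cons.1 hmem with h | h
          · exact hs (h ▸ (List.mem_cons_self : a ∈ a :: l'))
          · exact hs (List.mem_cons_of_mem a (hm₄ s h))
        · intro x hx
          rcases List.mem_cons.1 hx with h | h
          · exact h ▸ (List.mem_cons_self : a ∈ a :: l')
          · exact List.mem_cons_of_mem a (hm₄ x h)

/-- From reflexive-transitive closure, extract a duplicate-free chain list. -/
private lemma exists_nodup_chain {V : Type*} [DecidableEq V] {r : V → V → Prop} {s t : V}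
    (h : Relation.ReflTransGen r s t) :
    ∃ l : List V, l.Nodup ∧ List.Chain' r l ∧ l.head? = some s ∧ l.getLast? = some t := by
  obtain ⟨l, hl₁, hl₂⟩ := List.exists_isChain_cons_of_relationReflTransGen h
  obtain ⟨m, hm₁, hm₂, hm₃, _⟩ := cut_chain l.length l le_rfl s hl₁
  refine ⟨s :: m, hm₃, hm₁, rfl, ?_⟩
  rw [hm₂, List.getLast?_eq_getLast (List.cons_ne_nil _ _), hl₂]

private lemma reflTransGen_of_nodup_chain {V : Type*} {r : V → V → Prop} {s t : V}
    {l : List V} (hc : List.Chain' r l) (hh : l.head? = some s) (hl : l.getLast? = some t) :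
    Relation.ReflTransGen r s t := by
  cases l with
  | nil => simp at hh
  | cons a m =>
    obtain rfl : a = s := by simpa using hh
    refine List.relationReflTransGen_of_exists_isChain_cons m hc ?_
    rwa [List.getLast?_eq_getLast (List.cons_ne_nil _ _), Option.some_inj] at hl

open Classical in
private lemma reach_iff_inter {V : Type*} [DecidableEq V] (E : Finset (V × V)) (s t : V)
    (F : Finset (V × V)) (hF : F ⊆ E) :
    t ∈ reach (↑F : Set (V × V)) {s} ↔
      t ∈ reach (↑(F ∩ simplePathArcs E s t) : Set (V × V)) {s} := by
  constructor
  · rintro ⟨x, hx, hpath⟩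
    rw [show x = s from hx] at hpath
    obtain ⟨l, hnd, hc, hh, hl⟩ := exists_nodup_chain hpath
    refine ⟨s, rfl, reflTransGen_of_nodup_chain (r := fun a b => (a, b) ∈
      (↑(F ∩ simplePathArcs E s t) : Set (V × V))) ?_ hh hl⟩
    apply chain'_of_zip
    intro e he
    have heF : (e.1, e.2) ∈ F := chain'_zip hc e he
    have heE : e ∈ E := hF (by simpa using heF)
    have heA : e ∈ simplePathArcs E s t := by
      rw [simplePathArcs, Finset.mem_filter]
      exact ⟨heE, l, hnd, hc.imp (fun a b hab => hF hab), hh, hl, he⟩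
    simp only [Finset.coe_inter, Set.mem_inter_iff, Finset.mem_coe]
    exact ⟨by simpa using heF, heA⟩
  · rintro ⟨x, hx, hpath⟩
    rw [show x = s from hx] at hpath
    refine ⟨s, rfl, Relation.ReflTransGen.mono ?_ _ _ hpath⟩
    intro a b hab
    simp only [Finset.coe_inter, Set.mem_inter_iff, Finset.mem_coe] at hab
    exact hab.1

open Classical in
/-- The number of arc subsets of `E` connecting `s` to `t` equals the
number of arc subsets of `E_st` connecting `s` to `t` times `2^{|E ∖ E_st|}`. -/
theorem st_connecting_subsets_count {V : Type*} [Fintype V] [DecidableEq V]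
    (E : Finset (V × V)) (s t : V) (hst : s ≠ t) :
    (E.powerset.filter
      (fun F : Finset (V × V) => t ∈ reach (↑F : Set (V × V)) {s})).card =
    ((simplePathArcs E s t).powerset.filter
      (fun F : Finset (V × V) => t ∈ reach (↑F : Set (V × V)) {s})).card
      * 2 ^ (E \ simplePathArcs E s t).card := by
  classical
  set A := simplePathArcs E s t with hA
  have hAE : A ⊆ E := Finset.filter_subset _ _
  rw [← Finset.card_powerset, ← Finset.card_product]
  apply Finset.card_bij' (fun F _ => (F ∩ A, F \ A))
    (fun p _ => p.1 ∪ p.2)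
  · -- maps into
    intro F hF
    simp only [Finset.mem_filter, Finset.mem_powerset] at hF
    simp only [Finset.mem_product, Finset.mem_filter, Finset.mem_powerset]
    refine ⟨⟨Finset.inter_subset_right, ?_⟩, ?_⟩
    · exact (reach_iff_inter E s t F hF.1).1 hF.2
    · exact Finset.sdiff_subset_sdiff hF.1 le_rfl
  · -- reverse maps into
    intro p hp
    simp only [Finset.mem_product, Finset.mem_filter, Finset.mem_powerset] at hp
    obtain ⟨⟨h1A, h1P⟩, h2⟩ := hp
    have hsub : p.1 ∪ p.2 ⊆ E := by
      apply Finset.union_subset (h1A.trans hAE)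
      exact h2.trans (Finset.sdiff_subset)
    have hinter : (p.1 ∪ p.2) ∩ A = p.1 := by
      rw [Finset.union_inter_distrib_right]
      rw [Finset.inter_eq_left.2 h1A]
      have : p.2 ∩ A = ∅ := by
        rw [← Finset.disjoint_iff_inter_eq_empty]
        exact Finset.disjoint_of_subset_left h2 Finset.sdiff_disjoint
      rw [this, Finset.union_empty]
    simp only [Finset.mem_filter, Finset.mem_powerset]
    refine ⟨hsub, ?_⟩
    rw [reach_iff_inter E s t _ hsub, hinter]
    exact (reach_iff_inter E s t p.1 (h1A.trans hAE)).2
      (by rwa [Finset.inter_eq_left.2 h1A])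
  · -- left inverse
    intro F hF
    ext a
    simp only [Finset.mem_union, Finset.mem_inter, Finset.mem_sdiff]
    tauto
  · -- right inverse
    intro p hp
    simp only [Finset.mem_product, Finset.mem_filter, Finset.mem_powerset] at hp
    obtain ⟨⟨h1A, _⟩, h2⟩ := hp
    have hd : Disjoint p.2 A := Finset.disjoint_of_subset_left h2 Finset.sdiff_disjoint
    have hinter : (p.1 ∪ p.2) ∩ A = p.1 := by
      rw [Finset.union_inter_distrib_right, Finset.inter_eq_left.2 h1A,
        Finset.disjoint_iff_inter_eq_empty.1 hd, Finset.union_empty]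
    have hsdiff : (p.1 ∪ p.2) \ A = p.2 := by
      rw [Finset.union_sdiff_distrib, Finset.sdiff_eq_empty_iff_subset.2 h1A,
        Finset.empty_union, Finset.sdiff_eq_self_iff_disjoint.2 hd]
    ext <;> simp [hinter, hsdiff]
end

section
/- Correctness of the Dominating Set reduction: Let H = (V, E) be a finite simple undirected graph and k ∈ ℕ. Construct the finite directed graph G whose node set is the disjoint union V ⊔ (V × {1,…,k+1}) and whose arcs are: for each v ∈ V and each i ∈ {1,…,k+1}, an arc from v to (v, i); and for each edge {u, v} ∈ E and each i ∈ {1,…,k+1}, an arc from u to (v, i) and an arc from v to (u, i). Let A := V × {1,…,k+1}. Then H has a dominating set of size at most k (a set D ⊆ V such that every vertex of V is in D or adjacent to a vertex of D) if and only if there exists a set X of nodes of G with |X| ≤ k and |A Δ reach(X)| ≤ k. -/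
/-- The arc set of the directed graph constructed in the Dominating Set reduction:
each initiator `u` points to all `k+1` copies of `u` and of every neighbor of `u`. -/
def domArcs {V : Type*} (H : SimpleGraph V) (k : ℕ) :
    Set ((V ⊕ V × Fin (k + 1)) × (V ⊕ V × Fin (k + 1))) :=
  {a | ∃ (u v : V) (i : Fin (k + 1)),
        (u = v ∨ H.Adj u v) ∧ a = (Sum.inl u, Sum.inr (v, i))}

lemma domArcs_rtg {V : Type*} {H : SimpleGraph V} {k : ℕ}
    {x y : V ⊕ V × Fin (k + 1)}
    (h : Relation.ReflTransGen (fun a b => (a, b) ∈ domArcs H k) x y) :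
    y = x ∨ ∃ u w, ∃ i : Fin (k + 1),
      x = Sum.inl u ∧ y = Sum.inr (w, i) ∧ (u = w ∨ H.Adj u w) := by
  induction h with
  | refl => exact Or.inl rfl
  | @tail b c h1 h2 ih =>
    obtain ⟨u, w, i, huw, heq⟩ := h2
    have hb : b = Sum.inl u := congrArg Prod.fst heq
    have hc : c = Sum.inr (w, i) := congrArg Prod.snd heq
    rcases ih with rfl | ⟨u', w', i', hx, hb', _⟩
    · exact Or.inr ⟨u, w, i, hb, hc, huw⟩
    · rw [hb'] at hb; simp at hb

lemma mem_reach_iff {V : Type*} {H : SimpleGraph V} {k : ℕ}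
    {X : Set (V ⊕ V × Fin (k + 1))} {a : V ⊕ V × Fin (k + 1)} :
    a ∈ reach (domArcs H k) X ↔
      a ∈ X ∨ ∃ u w, ∃ i : Fin (k + 1),
        Sum.inl u ∈ X ∧ a = Sum.inr (w, i) ∧ (u = w ∨ H.Adj u w) := by
  constructor
  · rintro ⟨x, hx, h⟩
    rcases domArcs_rtg h with rfl | ⟨u, w, i, rfl, rfl, huw⟩
    · exact Or.inl hx
    · exact Or.inr ⟨u, w, i, hx, rfl, huw⟩
  · rintro (h | ⟨u, w, i, hu, rfl, huw⟩)
    · exact ⟨a, h, Relation.ReflTransGen.refl⟩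
    · exact ⟨Sum.inl u, hu, Relation.ReflTransGen.single ⟨u, w, i, huw, rfl⟩⟩

/-- Correctness of the Dominating Set reduction. -/
theorem dominating_set_reduction_correct {V : Type*} [Fintype V]
    (H : SimpleGraph V) (k : ℕ) :
    (∃ D : Finset V, D.card ≤ k ∧
        ∀ v : V, v ∈ D ∨ ∃ d ∈ D, H.Adj d v) ↔
    (∃ X : Set (V ⊕ V × Fin (k + 1)),
      X.ncard ≤ k ∧
      ((Set.range Sum.inr \ reach (domArcs H k) X) ∪
        (reach (domArcs H k) X \ Set.range Sum.inr)).ncard ≤ k) := by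
  classical
  constructor
  · rintro ⟨D, hDcard, hdom⟩
    refine ⟨Sum.inl '' (↑D : Set V), ?_, ?_⟩
    · rw [Set.ncard_image_of_injective _ Sum.inl_injective, Set.ncard_coe_finset]
      exact hDcard
    · have hreach : reach (domArcs H k) (Sum.inl '' (↑D : Set V))
          = Sum.inl '' (↑D : Set V) ∪ Set.range Sum.inr := by
        ext a
        rw [mem_reach_iff]
        constructor
        · rintro (h | ⟨u, w, i, _, rfl, _⟩)
          · exact Or.inl h
          · exact Or.inr ⟨(w, i), rfl⟩
        · rintro (h | ⟨⟨w, i⟩, rfl⟩)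
          · exact Or.inl h
          · right
            rcases hdom w with hw | ⟨d, hd, hadj⟩
            · exact ⟨w, w, i, ⟨w, by simpa using hw, rfl⟩, rfl, Or.inl rfl⟩
            · exact ⟨d, w, i, ⟨d, by simpa using hd, rfl⟩, rfl, Or.inr hadj⟩
      rw [hreach]
      have h1 : Set.range (Sum.inr : V × Fin (k+1) → _)
          \ (Sum.inl '' (↑D : Set V) ∪ Set.range Sum.inr) = ∅ := by
        apply Set.diff_eq_empty.mpr
        exact Set.subset_union_right
      have h2 : (Sum.inl '' (↑D : Set V) ∪ Set.range (Sum.inr : V × Fin (k+1) → _))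
          \ Set.range Sum.inr = Sum.inl '' (↑D : Set V) := by
        ext a
        simp only [Set.mem_diff, Set.mem_union, Set.mem_range, Set.mem_image]
        constructor
        · rintro ⟨hl | ⟨p, rfl⟩, hr⟩
          · exact hl
          · exact absurd ⟨p, rfl⟩ hr
        · rintro ⟨d, hd, rfl⟩
          exact ⟨Or.inl ⟨d, hd, rfl⟩, by rintro ⟨p, h⟩; simp at h⟩
      rw [h1, h2, Set.empty_union,
        Set.ncard_image_of_injective _ Sum.inl_injective, Set.ncard_coe_finset]
      exact hDcard
  · rintro ⟨X, hXcard, hScard⟩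
    set S := ((Set.range Sum.inr \ reach (domArcs H k) X) ∪
        (reach (domArcs H k) X \ Set.range Sum.inr)) with hSdef
    set D0 : Set V := {v | Sum.inl v ∈ X} with hD0def
    set U : Set V := {v | ¬ (v ∈ D0 ∨ ∃ d ∈ D0, H.Adj d v)} with hUdef
    -- for each v, some copy of v is not in X
    have hex : ∀ v : V, ∃ i : Fin (k + 1), Sum.inr (v, i) ∉ X := by
      intro v
      by_contra hcon
      push_neg at hcon
      have hsub : Set.range (fun i : Fin (k+1) =>
          (Sum.inr (v, i) : V ⊕ V × Fin (k+1))) ⊆ X := by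
        rintro _ ⟨i, rfl⟩; exact hcon i
      have hinj : Function.Injective
          (fun i : Fin (k+1) => (Sum.inr (v, i) : V ⊕ V × Fin (k+1))) := by
        intro i j hij; simpa using hij
      have hle := Set.ncard_le_ncard hsub (Set.toFinite X)
      rw [← Set.image_univ, Set.ncard_image_of_injective _ hinj,
        Set.ncard_univ] at hle
      simp [Nat.card_eq_fintype_card] at hle
      omega
    choose f hf using hex
    -- the key counting subset of S
    have hsub1 : Sum.inl '' D0 ⊆ S := by
      rintro _ ⟨d, hd, rfl⟩
      right
      refine ⟨⟨Sum.inl d, hd, Relation.ReflTransGen.refl⟩, ?_⟩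
      rintro ⟨p, h⟩; simp at h
    have hsub2 : (fun v => (Sum.inr (v, f v) : V ⊕ V × Fin (k+1))) '' U ⊆ S := by
      rintro _ ⟨v, hv, rfl⟩
      left
      refine ⟨⟨(v, f v), rfl⟩, ?_⟩
      rw [mem_reach_iff]
      rintro (h | ⟨u, w, i, hu, heq, huw⟩)
      · exact hf v h
      · simp only [Sum.inr.injEq, Prod.mk.injEq] at heq
        obtain ⟨h1, h2⟩ := heq
        subst h1
        apply hv
        rcases huw with rfl | hadj
        · exact Or.inl hu
        · exact Or.inr ⟨u, hu, hadj⟩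
    have hdisj : Disjoint (Sum.inl '' D0)
        ((fun v => (Sum.inr (v, f v) : V ⊕ V × Fin (k+1))) '' U) := by
      rw [Set.disjoint_left]
      rintro _ ⟨d, _, rfl⟩ ⟨v, _, h⟩
      simp at h
    have hcount : D0.ncard + U.ncard ≤ k := by
      have hinj2 : Function.Injective
          (fun v => (Sum.inr (v, f v) : V ⊕ V × Fin (k+1))) := by
        intro a b hab
        have := Sum.inr_injective hab
        exact congrArg Prod.fst this
      have h1 : (Sum.inl '' D0 ∪
          (fun v => (Sum.inr (v, f v) : V ⊕ V × Fin (k+1))) '' U).ncard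
          = D0.ncard + U.ncard := by
        rw [Set.ncard_union_eq hdisj (Set.toFinite _) (Set.toFinite _),
          Set.ncard_image_of_injective _ Sum.inl_injective,
          Set.ncard_image_of_injective _ hinj2]
      calc D0.ncard + U.ncard
          = (Sum.inl '' D0 ∪
            (fun v => (Sum.inr (v, f v) : V ⊕ V × Fin (k+1))) '' U).ncard := h1.symm
        _ ≤ S.ncard := Set.ncard_le_ncard (Set.union_subset hsub1 hsub2)
            (Set.toFinite _)
        _ ≤ k := hScard
    refine ⟨(Set.toFinite (D0 ∪ U)).toFinset, ?_, ?_⟩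
    · calc (Set.toFinite (D0 ∪ U)).toFinset.card = (D0 ∪ U).ncard :=
            (Set.ncard_eq_toFinset_card _ (Set.toFinite _)).symm
        _ ≤ D0.ncard + U.ncard := Set.ncard_union_le _ _
        _ ≤ k := hcount
    · intro v
      by_cases hv : v ∈ D0 ∨ ∃ d ∈ D0, H.Adj d v
      · rcases hv with hv | ⟨d, hd, hadj⟩
        · left; simp [Set.Finite.mem_toFinset]; exact Or.inl hv
        · right; exact ⟨d, by simp [Set.Finite.mem_toFinset]; exact Or.inl hd, hadj⟩
      · left; simp [Set.Finite.mem_toFinset]; exact Or.inr hv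
end

section
/- Correctness of the Set Cover reduction: Let U be a finite set, let S_1, …, S_m ⊆ U be sets with ⋃_{j=1}^m S_j = U (every element lies in at least one set), and let h ≤ m. Construct the finite directed graph G whose node set is the disjoint union {1,…,m} ⊔ U and which has an arc from j to u if and only if u ∈ S_j. Then there exists J ⊆ {1,…,m} with |J| = h and ⋃_{j ∈ J} S_j = U if and only if there exists a set X of nodes of G with |X| ≤ h such that the number of nodes of G not in reach(X) is at most m − h. (This is the Influence Maximization case A = all nodes, where the cost equals the number of unreached nodes.) -/
/-- The arc set of the directed graph constructed in the Set Cover reduction: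
the node of set `j` points to the node of element `u` iff `u ∈ S j`. -/
def scArcs {U : Type*} {m : ℕ} (S : Fin m → Set U) :
    Set ((Fin m ⊕ U) × (Fin m ⊕ U)) :=
  {a | ∃ (j : Fin m) (u : U), u ∈ S j ∧ a = (Sum.inl j, Sum.inr u)}

lemma reach_eq {U : Type*} {m : ℕ} (S : Fin m → Set U) (X : Set (Fin m ⊕ U)) :
    reach (scArcs S) X
      = X ∪ {v | ∃ j u, Sum.inl j ∈ X ∧ u ∈ S j ∧ v = Sum.inr u} := by
  ext v
  constructor
  · rintro ⟨x, hx, hrt⟩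
    induction hrt with
    | refl => exact Or.inl hx
    | tail hab hbc ih =>
      obtain ⟨j, u, hu, heq⟩ := hbc
      obtain ⟨hb, hv⟩ := Prod.mk.injEq .. ▸ heq
      subst hb hv
      rcases ih with hX | ⟨j', u', _, _, habs⟩
      · exact Or.inr ⟨j, u, hX, hu, rfl⟩
      · simp at habs
  · rintro (hx | ⟨j, u, hj, hu, rfl⟩)
    · exact ⟨v, hx, Relation.ReflTransGen.refl⟩
    · exact ⟨Sum.inl j, hj, Relation.ReflTransGen.single ⟨j, u, hu, rfl⟩⟩


/-- Correctness of the Set Cover reduction (Influence Maximization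
with `A` = all nodes: the cost of `X` is the number of nodes not reached by `X`). -/
theorem set_cover_reduction_correct {U : Type*} [Fintype U]
    (m h : ℕ) (hhm : h ≤ m) (S : Fin m → Set U)
    (hcov : ∀ u : U, ∃ j : Fin m, u ∈ S j) :
    (∃ J : Finset (Fin m), J.card = h ∧ ∀ u : U, ∃ j ∈ J, u ∈ S j) ↔
    (∃ X : Set (Fin m ⊕ U),
      X.ncard ≤ h ∧ ((reach (scArcs S) X)ᶜ).ncard ≤ m - h) := by
  classical
  constructor
  · rintro ⟨J, hJcard, hJcov⟩
    refine ⟨Sum.inl '' ↑J, ?_, ?_⟩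
    · rw [Set.ncard_image_of_injective _ Sum.inl_injective, Set.ncard_coe_finset, hJcard]
    · have hc : (reach (scArcs S) (Sum.inl '' ↑J))ᶜ = Sum.inl '' ↑(Jᶜ) := by
        ext v
        rw [Set.mem_compl_iff, reach_eq]
        cases v with
        | inl j =>
          simp only [Set.mem_union, Set.mem_image, Set.mem_setOf_eq, Finset.coe_compl,
            Set.mem_compl_iff, Finset.mem_coe, Finset.coe_sort_coe]
          constructor
          · intro hv
            exact ⟨j, fun hj => hv (Or.inl ⟨j, hj, rfl⟩), rfl⟩
          · rintro ⟨j', hj', heq⟩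
            obtain rfl : j' = j := Sum.inl_injective heq
            rintro (⟨j'', hj'', heq2⟩ | ⟨j'', u, _, _, habs⟩)
            · exact hj' (Sum.inl_injective heq2 ▸ hj'')
            · simp at habs
        | inr u =>
          simp only [Set.mem_union, Set.mem_image, Set.mem_setOf_eq]
          constructor
          · intro hv
            obtain ⟨j, hj, hu⟩ := hJcov u
            exact absurd (Or.inr ⟨j, u, ⟨j, hj, rfl⟩, hu, rfl⟩) hv
          · rintro ⟨j, _, habs⟩
            simp at habs
      rw [hc, Set.ncard_image_of_injective _ Sum.inl_injective, Set.ncard_coe_finset,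
        Finset.card_compl, hJcard, Fintype.card_fin]
  · rintro ⟨X, hXcard, hXcost⟩
    set T : Set (Fin m) := {j | Sum.inl j ∈ X} with hT
    have hTfin : T.Finite := Set.toFinite T
    set J : Finset (Fin m) := hTfin.toFinset with hJ
    have hmemJ : ∀ j, j ∈ J ↔ Sum.inl j ∈ X := fun j => hTfin.mem_toFinset
    -- inl '' Jᶜ ⊆ (reach X)ᶜ
    have hsub : Sum.inl '' (↑(Jᶜ) : Set (Fin m)) ⊆ (reach (scArcs S) X)ᶜ := by
      rintro v ⟨j, hj, rfl⟩
      simp only [Finset.coe_compl, Set.mem_compl_iff, Finset.mem_coe, hmemJ] at hj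
      rw [Set.mem_compl_iff, reach_eq]
      rintro (hX | ⟨j', u, _, _, habs⟩)
      · exact hj hX
      · simp at habs
    have hncard1 : ((Sum.inl '' (↑(Jᶜ) : Set (Fin m)) : Set (Fin m ⊕ U))).ncard = m - J.card := by
      rw [Set.ncard_image_of_injective _ Sum.inl_injective, Set.ncard_coe_finset,
        Finset.card_compl, Fintype.card_fin]
    have hle : m - J.card ≤ m - h := by
      rw [← hncard1]
      exact le_trans (Set.ncard_le_ncard hsub (Set.toFinite _)) hXcost
    -- J.card ≤ X.ncard
    have hJX : Sum.inl '' (↑J : Set (Fin m)) ⊆ X := by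
      rintro v ⟨j, hj, rfl⟩
      exact (hmemJ j).mp hj
    have hJle : J.card ≤ X.ncard := by
      have := Set.ncard_le_ncard hJX (Set.toFinite X)
      rwa [Set.ncard_image_of_injective _ Sum.inl_injective, Set.ncard_coe_finset] at this
    have hJcard : J.card = h := by omega
    -- X = inl '' J
    have hXeq : Sum.inl '' (↑J : Set (Fin m)) = X := by
      apply Set.eq_of_subset_of_ncard_le hJX
      rw [Set.ncard_image_of_injective _ Sum.inl_injective, Set.ncard_coe_finset, hJcard]
      exact hXcard
    -- complement equals inl '' Jᶜ
    have hcompl : (reach (scArcs S) X)ᶜ = Sum.inl '' (↑(Jᶜ) : Set (Fin m)) := by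
      symm
      apply Set.eq_of_subset_of_ncard_le hsub _ (Set.toFinite _)
      rw [hncard1, hJcard]
      exact hXcost
    refine ⟨J, hJcard, fun u => ?_⟩
    have hur : Sum.inr u ∈ reach (scArcs S) X := by
      by_contra hne
      rw [← Set.mem_compl_iff, hcompl] at hne
      obtain ⟨j, _, habs⟩ := hne
      simp at habs
    rw [reach_eq] at hur
    rcases hur with hX | ⟨j, u', hj, hu', heq⟩
    · rw [← hXeq] at hX
      obtain ⟨j, _, habs⟩ := hX
      simp at habs
    · obtain rfl : u' = u := Sum.inr_injective heq.symm
      exact ⟨j, (hmemJ j).mpr hj, hu'⟩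
end

section
/- Correctness of the Independent Set reduction: Let H = (V, E) be a finite simple undirected graph and let k ≤ |V|. Construct the finite directed graph G whose node set is the disjoint union V ⊔ E and which has an arc from v ∈ V to e ∈ E if and only if v is an endpoint of e. Then H has an independent set of size at least k (a set I ⊆ V with no edge having both endpoints in I) if and only if there exists a set X of nodes of G with |X| ≤ |V| − k such that the number of nodes of G not in reach(X) is at most k. (This is the Influence Maximization case A = all nodes, where the cost equals the number of unreached nodes.) -/
/-- The arc set of the directed graph constructed in the Independent Set reduction:
a vertex node `v` points to an edge node `e` iff `v` is an endpoint of `e`. -/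
def isArcs {V : Type*} (H : SimpleGraph V) :
    Set ((V ⊕ ↥H.edgeSet) × (V ⊕ ↥H.edgeSet)) :=
  {a | ∃ (v : V) (e : H.edgeSet),
        v ∈ (e : Sym2 V) ∧ a = (Sum.inl v, Sum.inr e)}

open Sum Set

lemma reach_mem' {V : Type*} {H : SimpleGraph V} {X : Set (V ⊕ ↥H.edgeSet)}
    {z : V ⊕ ↥H.edgeSet} (hz : z ∈ reach (isArcs H) X) :
    z ∈ X ∨ ∃ (v : V) (e : H.edgeSet), v ∈ (e : Sym2 V) ∧ inl v ∈ X ∧ z = inr e := by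
  obtain ⟨x, hx, hpath⟩ := hz
  have key : x = z ∨ (x, z) ∈ isArcs H := by
    induction hpath with
    | refl => exact Or.inl rfl
    | tail h1 h2 ih =>
      rcases ih with rfl | hxb
      · exact Or.inr h2
      · obtain ⟨v', e', _, hb⟩ := hxb
        obtain ⟨v, e, hve, hc⟩ := h2
        have hb1 := congrArg Prod.snd hb
        have hc1 := congrArg Prod.fst hc
        simp at hb1 hc1
        rw [hb1] at hc1
        exact absurd hc1 (by simp)
  rcases key with rfl | harc
  · exact Or.inl hx
  · obtain ⟨v, e, hve, heq⟩ := harc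
    have h1 := congrArg Prod.fst heq
    have h2 := congrArg Prod.snd heq
    simp at h1 h2
    exact Or.inr ⟨v, e, hve, h1 ▸ hx, h2⟩

lemma subset_reach' {V : Type*} (S : Set (V × V)) (X : Set V) : X ⊆ reach S X :=
  fun x hx => ⟨x, hx, Relation.ReflTransGen.refl⟩

/-- Correctness of the Independent Set reduction (Influence
Maximization with `A` = all nodes: the cost of `X` is the number of unreached
nodes). -/
theorem independent_set_reduction_correct {V : Type*} [Fintype V]
    (H : SimpleGraph V) (k : ℕ) (hk : k ≤ Fintype.card V) :
    (∃ I : Finset V, k ≤ I.card ∧ ∀ u ∈ I, ∀ v ∈ I, ¬ H.Adj u v) ↔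
    (∃ X : Set (V ⊕ ↥H.edgeSet),
      X.ncard ≤ Fintype.card V - k ∧
      ((reach (isArcs H) X)ᶜ).ncard ≤ k) := by
  classical
  haveI : Finite (↥H.edgeSet) := Subtype.finite
  constructor
  · rintro ⟨I, hIcard, hInd⟩
    obtain ⟨I', hI'sub, hI'card⟩ := Finset.exists_subset_card_eq hIcard
    have hInd' : ∀ u ∈ I', ∀ v ∈ I', ¬ H.Adj u v :=
      fun u hu v hv => hInd u (hI'sub hu) v (hI'sub hv)
    refine ⟨inl '' ((↑I' : Set V)ᶜ), ?_, ?_⟩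
    · rw [ncard_image_of_injective _ inl_injective]
      have hsum : ((↑I' : Set V)).ncard + ((↑I' : Set V)ᶜ).ncard = Fintype.card V := by
        rw [← Nat.card_eq_fintype_card]
        exact Set.ncard_add_ncard_compl _
      rw [Set.ncard_coe_finset, hI'card] at hsum
      omega
    · have hsub : (reach (isArcs H) (inl '' ((↑I' : Set V)ᶜ)))ᶜ ⊆ inl '' (↑I' : Set V) := by
        intro z hz
        rcases z with v | e
        · by_contra hvI
          refine hz (subset_reach' _ _ ⟨v, ?_, rfl⟩)
          intro hvmem
          exact hvI ⟨v, hvmem, rfl⟩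
        · exfalso
          obtain ⟨es, hes⟩ := e
          induction es using Sym2.ind with
          | _ a b =>
            have hadj : H.Adj a b := hes
            have hab : a ∉ I' ∨ b ∉ I' := by
              by_contra hcon
              push_neg at hcon
              exact hInd' a hcon.1 b hcon.2 hadj
            have key : ∀ w : V, w ∉ I' → w ∈ (s(a, b) : Sym2 V) →
                (inr ⟨s(a,b), hes⟩ : V ⊕ ↥H.edgeSet) ∈ reach (isArcs H) (inl '' ((↑I' : Set V)ᶜ)) := by
              intro w hw hwmem
              refine ⟨inl w, ⟨w, by simpa using hw, rfl⟩, ?_⟩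
              exact Relation.ReflTransGen.single ⟨w, ⟨s(a,b), hes⟩, hwmem, rfl⟩
            rcases hab with h | h
            · exact hz (key a h (by simp))
            · exact hz (key b h (by simp))
      calc ((reach (isArcs H) (inl '' ((↑I' : Set V)ᶜ)))ᶜ).ncard
          ≤ (inl '' (↑I' : Set V)).ncard := ncard_le_ncard hsub (toFinite _)
        _ = k := by rw [ncard_image_of_injective _ inl_injective, Set.ncard_coe_finset, hI'card]
  · rintro ⟨X, hX1, hX2⟩
    set Y : Set V := inl ⁻¹' X with hY
    -- vertices not in Y are unreached
    have hYsub : inl '' Yᶜ ⊆ (reach (isArcs H) X)ᶜ := by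
      rintro z ⟨v, hv, rfl⟩ hz
      rcases reach_mem' hz with h | ⟨w, e, _, _, heq⟩
      · exact hv h
      · exact (inl_ne_inr heq)
    have hYim : ((inl '' Yᶜ : Set (V ⊕ ↥H.edgeSet))).ncard = Yᶜ.ncard := ncard_image_of_injective _ inl_injective
    have hYsum : Y.ncard + Yᶜ.ncard = Fintype.card V := by
      rw [← Nat.card_eq_fintype_card]
      exact Set.ncard_add_ncard_compl Y
    have hYc_le : Yᶜ.ncard ≤ k := by
      calc Yᶜ.ncard = (inl '' Yᶜ).ncard := hYim.symm
        _ ≤ ((reach (isArcs H) X)ᶜ).ncard := ncard_le_ncard hYsub (toFinite _)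
        _ ≤ k := hX2
    -- no edge nodes in X
    have hnoedge : ∀ e : H.edgeSet, inr e ∉ X := by
      intro e he
      have hsub : insert (inr e) (inl '' Y) ⊆ X :=
        insert_subset he (image_preimage_subset _ _)
      have hcard : (insert (inr e : V ⊕ ↥H.edgeSet) (inl '' Y)).ncard = Y.ncard + 1 := by
        rw [ncard_insert_of_notMem (by simp) (toFinite _), ncard_image_of_injective _ inl_injective]
      have h1 : Y.ncard + 1 ≤ X.ncard := hcard ▸ ncard_le_ncard hsub (toFinite _)
      omega
    have hXim : X = inl '' Y := by
      apply Subset.antisymm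
      · rintro x hx
        rcases x with v | e
        · exact ⟨v, hx, rfl⟩
        · exact absurd hx (hnoedge e)
      · exact image_preimage_subset _ _
    have hXcard : X.ncard = Y.ncard := by
      rw [hXim, ncard_image_of_injective _ inl_injective]
    have hYc_ge : k ≤ Yᶜ.ncard := by omega
    refine ⟨(toFinite Yᶜ).toFinset, ?_, ?_⟩
    · rwa [Set.ncard_eq_toFinset_card Yᶜ (toFinite Yᶜ)] at hYc_ge
    · intro u hu v hv hadj
      rw [Set.Finite.mem_toFinset] at hu hv
      have he : s(u, v) ∈ H.edgeSet := hadj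
      set e : H.edgeSet := ⟨s(u, v), he⟩ with hedef
      have hereach : (inr e : V ⊕ ↥H.edgeSet) ∉ reach (isArcs H) X := by
        intro hr
        rcases reach_mem' hr with h | ⟨w, e', hwe, hwX, heq⟩
        · exact hnoedge e h
        · have : e' = e := by simpa using heq.symm
          subst this
          have hw : w = u ∨ w = v := by
            have := hwe
            rw [hedef] at this
            simpa [Sym2.mem_iff] using this
          rcases hw with rfl | rfl
          · exact hu hwX
          · exact hv hwX
      have hsub2 : insert (inr e : V ⊕ ↥H.edgeSet) (inl '' Yᶜ) ⊆ (reach (isArcs H) X)ᶜ :=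
        insert_subset hereach hYsub
      have hcard2 : (insert (inr e : V ⊕ ↥H.edgeSet) (inl '' Yᶜ)).ncard = Yᶜ.ncard + 1 := by
        rw [ncard_insert_of_notMem (by simp) (toFinite _), hYim]
      have := hcard2 ▸ ncard_le_ncard hsub2 (toFinite _)
      omega
end
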